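/- arXiv:1712.09290 — 2 statements merged into one kernel-verified Lean document; each statement's English description precedes it below -/
import Mathlib

section
/- Let n ≥ 1 and m be integers with n ≡ m+1 (mod 2) and n ≠ m+1. Then N⁰(m,n) = Σ_{k=0}^{n−1} N(m+1−k, (n−m−1)/2). -/
/-- An odd Durfee symbol of `n`: a subscript `D` together with two nonincreasing
sequences of odd positive integers, each entry at most `2D+1`, whose total weight
together with `2D²+2D+1` equals `n`. -/
structure OddDurfeeSymbol (n : ℕ) where
  D : ℕ
  top : List ℕ
  bot : List ℕ
  top_sorted : top.Pairwise (· ≥ ·)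
  bot_sorted : bot.Pairwise (· ≥ ·)
  top_odd : ∀ x ∈ top, Odd x
  bot_odd : ∀ x ∈ bot, Odd x
  top_le : ∀ x ∈ top, x ≤ 2 * D + 1
  bot_le : ∀ x ∈ bot, x ≤ 2 * D + 1
  sum_eq : top.sum + bot.sum + 2 * D ^ 2 + 2 * D + 1 = n

/-- The odd rank of an odd Durfee symbol: the number of entries in the top row
minus the number of entries in the bottom row. -/
def oddRank {n : ℕ} (σ : OddDurfeeSymbol n) : ℤ :=
  (σ.top.length : ℤ) - (σ.bot.length : ℤ)

/-- `N⁰(m,n)`: the number of odd Durfee symbols of `n` with odd rank `m`. -/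
noncomputable def N0 (m : ℤ) (n : ℕ) : ℕ :=
  Nat.card {σ : OddDurfeeSymbol n // oddRank σ = m}

/-- `N⁰(a,M;n)`: the number of odd Durfee symbols of `n` with odd rank congruent
to `a` modulo `M`. -/
noncomputable def N0mod (a : ℤ) (M : ℕ) (n : ℕ) : ℕ :=
  Nat.card {σ : OddDurfeeSymbol n // oddRank σ ≡ a [ZMOD (M : ℤ)]}

/-- The rank of a partition: its largest part minus its number of parts. -/
def partitionRank {n : ℕ} (P : Nat.Partition n) : ℤ :=
  (P.parts.sup : ℤ) - (P.parts.card : ℤ)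

/-- `N(m,n)`: the number of partitions of `n` with rank `m`; note this gives
`N(m,0) = 1` if `m = 0` and `0` otherwise. -/
noncomputable def rankCount (m : ℤ) (n : ℕ) : ℕ :=
  Nat.card {P : Nat.Partition n // partitionRank P = m}

/-- `N(m,j)` for an integer argument `j`, with the convention `N(m,j) = 0` for `j < 0`. -/
noncomputable def rankCountZ (m : ℤ) (j : ℤ) : ℕ :=
  if 0 ≤ j then rankCount m j.toNat else 0


namespace NZeroAux

/-- number of entries of `L` that are `> d` (the `d`-th column length of the conjugate). -/
def conjAt (L : List ℕ) (d : ℕ) : ℕ := L.countP (fun x => decide (d < x))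

lemma conjAt_le_length (L : List ℕ) (d : ℕ) : conjAt L d ≤ L.length :=
  List.countP_le_length

lemma conjAt_anti (L : List ℕ) {d e : ℕ} (h : d ≤ e) : conjAt L e ≤ conjAt L d := by
  apply List.countP_mono_left
  intro x _ hx
  simp only [decide_eq_true_eq] at *
  omega

lemma conjAt_pos_iff (L : List ℕ) (d : ℕ) : 0 < conjAt L d ↔ ∃ x ∈ L, d < x := by
  simp [conjAt, List.countP_pos_iff]

lemma conjAt_cons (a : ℕ) (L : List ℕ) (d : ℕ) :
    conjAt (a :: L) d = conjAt L d + (if d < a then 1 else 0) := by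
  simp [conjAt, List.countP_cons]

lemma conjAt_eq_zero {L : List ℕ} {d : ℕ} (h : ∀ x ∈ L, x ≤ d) : conjAt L d = 0 := by
  rw [conjAt, List.countP_eq_zero]
  intro x hx
  simp only [decide_eq_true_eq, not_lt]
  exact h x hx

/-- Key fact: for a nonincreasing list, entries `> d` form a prefix. -/
lemma lt_conjAt_iff {L : List ℕ} (hL : L.Pairwise (· ≥ ·)) {i d : ℕ} (hi : i < L.length) :
    i < conjAt L d ↔ d < L[i] := by
  induction L generalizing i with
  | nil => simp at hi
  | cons a L ih =>
    rw [List.pairwise_cons] at hL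
    obtain ⟨ha, hL⟩ := hL
    rw [conjAt_cons]
    cases i with
    | zero =>
      simp only [List.getElem_cons_zero]
      constructor
      · intro h
        by_contra hda
        push_neg at hda
        have hz : conjAt L d = 0 := conjAt_eq_zero (fun x hx => le_trans (ha x hx) hda)
        rw [hz, if_neg (by omega)] at h
        omega
      · intro h
        rw [if_pos h]
        omega
    | succ i =>
      simp only [List.getElem_cons_succ]
      have hi' : i < L.length := by simpa using hi
      by_cases hda : d < a
      · rw [if_pos hda]
        have := ih hL hi'
        omega
      · push_neg at hda
        have hz : conjAt L d = 0 := conjAt_eq_zero (fun x hx => le_trans (ha x hx) hda)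
        have hLi : L[i] ≤ a := ha _ (List.getElem_mem hi')
        rw [hz, if_neg (by omega)]
        constructor
        · omega
        · intro h; omega

/-- Summing shifted column counts recovers the sum of the (shifted) entries. -/
lemma sum_conjAt_shift (L : List ℕ) (c N : ℕ) (hb : ∀ x ∈ L, x ≤ c + N) :
    ∑ i ∈ Finset.range N, conjAt L (c + i) = (L.map (· - c)).sum := by
  induction L with
  | nil => simp [conjAt]
  | cons a L ih =>
    have hb' : ∀ x ∈ L, x ≤ c + N := fun x hx => hb x (List.mem_cons_of_mem _ hx)
    have ha : a ≤ c + N := hb a (List.mem_cons_self)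
    simp only [conjAt_cons, List.map_cons, List.sum_cons]
    rw [Finset.sum_add_distrib, ih hb']
    have h2 : ∑ i ∈ Finset.range N, (if c + i < a then 1 else 0) = a - c := by
      rw [Finset.sum_boole]
      have : Finset.filter (fun i => c + i < a) (Finset.range N) = Finset.range (a - c) := by
        ext y
        simp only [Finset.mem_filter, Finset.mem_range]
        omega
      rw [this, Finset.card_range, Nat.cast_id]
    rw [h2]
    omega

end NZeroAux

namespace NZeroAux2
open NZeroAux

lemma sorted_le {L : List ℕ} (hL : L.Pairwise (· ≥ ·)) {i j : ℕ} (hij : i ≤ j)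
    (hj : j < L.length) : L[j] ≤ L[i]'(lt_of_le_of_lt hij hj) := by
  rcases eq_or_lt_of_le hij with h | h
  · subst h; exact le_refl _
  · have := List.pairwise_iff_get.mp hL ⟨i, lt_of_le_of_lt hij hj⟩ ⟨j, hj⟩ h
    simpa using this

lemma sorted_getD_anti {L : List ℕ} (hL : L.Pairwise (· ≥ ·)) {i j : ℕ} (hij : i ≤ j) :
    L.getD j 0 ≤ L.getD i 0 := by
  by_cases hj : j < L.length
  · rw [List.getD_eq_getElem _ _ hj, List.getD_eq_getElem _ _ (lt_of_le_of_lt hij hj)]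
    exact sorted_le hL hij hj
  · push_neg at hj
    rw [List.getD_eq_default _ _ hj]
    exact Nat.zero_le _

lemma mem_le_headD {L : List ℕ} (hL : L.Pairwise (· ≥ ·)) {x : ℕ} (hx : x ∈ L) :
    x ≤ L.headD 0 := by
  cases L with
  | nil => simp at hx
  | cons a t =>
    rw [List.pairwise_cons] at hL
    rcases List.mem_cons.mp hx with h | h
    · subst h; exact le_refl _
    · exact hL.1 x h

lemma sup_coe_sorted {L : List ℕ} (hL : L.Pairwise (· ≥ ·)) :
    (↑L : Multiset ℕ).sup = L.headD 0 := by
  induction L with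
  | nil => simp
  | cons a t ih =>
    rw [List.pairwise_cons] at hL
    have h1 : (↑(a :: t) : Multiset ℕ) = a ::ₘ (↑t : Multiset ℕ) := rfl
    rw [h1, Multiset.sup_cons, ih hL.2]
    have : t.headD 0 ≤ a := by
      cases t with
      | nil => simp
      | cons b s => exact hL.1 b (List.mem_cons_self)
    rw [List.headD_cons]
    exact sup_eq_left.mpr this

lemma length_le_sum {L : List ℕ} (h : ∀ x ∈ L, 1 ≤ x) : L.length ≤ L.sum := by
  induction L with
  | nil => simp
  | cons a t ih =>
    simp only [List.length_cons, List.sum_cons]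
    have := h a (List.mem_cons_self)
    have := ih (fun x hx => h x (List.mem_cons_of_mem _ hx))
    omega

lemma odd_sum_map_div2 {L : List ℕ} (h : ∀ x ∈ L, Odd x) :
    2 * (L.map (· / 2)).sum + L.length = L.sum := by
  induction L with
  | nil => simp
  | cons a t ih =>
    simp only [List.map_cons, List.sum_cons, List.length_cons]
    have ha : Odd a := h a (List.mem_cons_self)
    obtain ⟨c, hc⟩ := ha
    have := ih (fun x hx => h x (List.mem_cons_of_mem _ hx))
    have hac : a / 2 = c := by omega
    omega

lemma countP_range_lt (c D : ℕ) :
    List.countP (fun d => decide (d < c)) (List.range D) = min c D := by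
  induction D with
  | zero => simp
  | succ D ih =>
    rw [List.range_succ, List.countP_append, ih, List.countP_cons]
    simp only [List.countP_nil, decide_eq_true_eq]
    by_cases h : D < c
    · rw [if_pos h]; omega
    · rw [if_neg h]; omega

/-- Double conjugation recovers the entries of a sorted list. -/
lemma conj_conj {L : List ℕ} (hL : L.Pairwise (· ≥ ·)) {D : ℕ} (hD : ∀ x ∈ L, x ≤ D)
    {i : ℕ} (hi : i < L.length) :
    conjAt ((List.range D).map (fun d => conjAt L d)) i = L[i] := by
  rw [conjAt, List.countP_map]
  have hcongr : ∀ x ∈ List.range D,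
      ((fun x => decide (i < x)) ∘ fun d => conjAt L d) x = true ↔
        (fun d => decide (d < L[i])) x = true := by
    intro x _
    simp only [Function.comp_apply, decide_eq_true_eq]
    exact lt_conjAt_iff hL hi
  rw [List.countP_congr hcongr, countP_range_lt]
  have : L[i] ≤ D := hD _ (List.getElem_mem hi)
  omega

/-- The size of the Durfee "rectangle" (`dur × (dur+1)`). -/
def dur (L : List ℕ) : ℕ :=
  ((Finset.range L.length).filter (fun d => d + 2 ≤ L.getD d 0)).card

lemma dur_le_length (L : List ℕ) : dur L ≤ L.length :=
  le_trans (Finset.card_filter_le _ _) (le_of_eq (Finset.card_range _))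

lemma lt_dur_iff {L : List ℕ} (hL : L.Pairwise (· ≥ ·)) (d : ℕ) :
    d < dur L ↔ d < L.length ∧ d + 2 ≤ L.getD d 0 := by
  constructor
  · intro h
    by_contra hc
    push_neg at hc
    have hsub : (Finset.range L.length).filter (fun x => x + 2 ≤ L.getD x 0)
        ⊆ Finset.range d := by
      intro a ha
      simp only [Finset.mem_filter, Finset.mem_range] at ha ⊢
      by_contra had
      push_neg at had
      have hdlen : d < L.length := lt_of_le_of_lt had ha.1
      have h1 : L.getD a 0 ≤ L.getD d 0 := sorted_getD_anti hL had
      have := hc hdlen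
      omega
    have hcard := Finset.card_le_card hsub
    rw [Finset.card_range] at hcard
    exact absurd (lt_of_lt_of_le h hcard) (lt_irrefl d)
  · rintro ⟨h1, h2⟩
    have hsub : Finset.range (d + 1)
        ⊆ (Finset.range L.length).filter (fun x => x + 2 ≤ L.getD x 0) := by
      intro a ha
      simp only [Finset.mem_range] at ha
      simp only [Finset.mem_filter, Finset.mem_range]
      have ha' : a ≤ d := by omega
      have h3 : L.getD d 0 ≤ L.getD a 0 := sorted_getD_anti hL ha'
      exact ⟨lt_of_le_of_lt ha' h1, by omega⟩
    have hcard := Finset.card_le_card hsub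
    rw [Finset.card_range] at hcard
    exact lt_of_lt_of_le (Nat.lt_succ_self d) hcard

lemma not_dur_succ {L : List ℕ} (hL : L.Pairwise (· ≥ ·)) (h : dur L < L.length) :
    L.getD (dur L) 0 ≤ dur L + 1 := by
  by_contra hc
  push_neg at hc
  have : dur L < dur L := (lt_dur_iff hL (dur L)).mpr ⟨h, by omega⟩
  omega

lemma dur_entry_ge {L : List ℕ} (hL : L.Pairwise (· ≥ ·)) {d : ℕ} (h : d < dur L) :
    dur L + 1 ≤ L.getD d 0 := by
  have h1 : dur L - 1 < dur L := by omega
  have h2 := (lt_dur_iff hL (dur L - 1)).mp h1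
  have h3 : L.getD (dur L - 1) 0 ≤ L.getD d 0 := sorted_getD_anti hL (by omega)
  omega

end NZeroAux2


namespace NZeroAux3
open NZeroAux NZeroAux2

lemma list_sum_map_range (f : ℕ → ℕ) (n : ℕ) :
    ((List.range n).map f).sum = ∑ i ∈ Finset.range n, f i := by
  induction n with
  | zero => simp
  | succ n ih => rw [List.range_succ, Finset.sum_range_succ, List.map_append]; simp [ih]

lemma sum_map_add_one (g : ℕ → ℕ) (L : List ℕ) :
    (L.map (fun b => g b + 1)).sum = (L.map g).sum + L.length := by
  induction L with
  | nil => simp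
  | cons a t ih => simp [ih]; omega

variable {n : ℕ} (σ : OddDurfeeSymbol n)

def alphaOf : List ℕ := σ.top.map (· / 2)

def fList : List ℕ :=
  (List.range σ.D).map (fun d => σ.D + 1 + conjAt (alphaOf σ) d) ++
    σ.bot.map (fun b => b / 2 + 1)

lemma alpha_length : (alphaOf σ).length = σ.top.length := by simp [alphaOf]

lemma alpha_sorted : (alphaOf σ).Pairwise (· ≥ ·) := by
  apply List.pairwise_map.mpr
  exact σ.top_sorted.imp (fun h => Nat.div_le_div_right h)

lemma alpha_le : ∀ x ∈ alphaOf σ, x ≤ σ.D := by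
  intro x hx
  obtain ⟨a, ha, rfl⟩ := List.mem_map.mp hx
  have := σ.top_le a ha
  omega

lemma alpha_getElem {i : ℕ} (hi : i < σ.top.length) :
    (alphaOf σ)[i]'(by rw [alpha_length]; exact hi) = σ.top[i] / 2 := by
  simp [alphaOf]

lemma fList_length : (fList σ).length = σ.D + σ.bot.length := by
  simp [fList]

lemma fList_sorted : (fList σ).Pairwise (· ≥ ·) := by
  rw [fList, List.pairwise_append]
  refine ⟨?_, ?_, ?_⟩
  · apply List.pairwise_map.mpr
    apply List.Pairwise.imp ?_ List.pairwise_lt_range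
    intro d e hde
    have := conjAt_anti (alphaOf σ) (le_of_lt hde)
    omega
  · apply List.pairwise_map.mpr
    apply σ.bot_sorted.imp
    intro a b hab
    omega
  · intro x hx y hy
    obtain ⟨d, _, rfl⟩ := List.mem_map.mp hx
    obtain ⟨b, hb, rfl⟩ := List.mem_map.mp hy
    have := σ.bot_le b hb
    omega

lemma fList_pos : ∀ x ∈ fList σ, 0 < x := by
  intro x hx
  rcases List.mem_append.mp hx with h | h
  · obtain ⟨d, _, rfl⟩ := List.mem_map.mp h; omega
  · obtain ⟨b, _, rfl⟩ := List.mem_map.mp h; omega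

lemma fList_sum : 2 * (fList σ).sum + 1 + σ.top.length = n + σ.bot.length := by
  have h1 : (fList σ).sum =
      ((List.range σ.D).map (fun d => σ.D + 1 + conjAt (alphaOf σ) d)).sum +
        (σ.bot.map (fun b => b / 2 + 1)).sum := by
    simp [fList]
  have h2 : ((List.range σ.D).map (fun d => σ.D + 1 + conjAt (alphaOf σ) d)).sum
      = σ.D * (σ.D + 1) + (alphaOf σ).sum := by
    rw [list_sum_map_range, Finset.sum_add_distrib, Finset.sum_const, Finset.card_range]
    have h3 := sum_conjAt_shift (alphaOf σ) 0 σ.D (by simpa using alpha_le σ)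
    simp only [Nat.zero_add] at h3
    rw [h3]
    simp [mul_comm]
  have h4 : (σ.bot.map (fun b => b / 2 + 1)).sum = (σ.bot.map (· / 2)).sum + σ.bot.length :=
    sum_map_add_one _ _
  have h5 := odd_sum_map_div2 σ.top_odd
  have h6 := odd_sum_map_div2 σ.bot_odd
  have h7 := σ.sum_eq
  have h8 : (alphaOf σ).sum = (σ.top.map (· / 2)).sum := rfl
  have h9 : σ.D ^ 2 = σ.D * σ.D := sq σ.D
  have h10 : σ.D * (σ.D + 1) = σ.D * σ.D + σ.D := by ring
  omega

lemma fList_getElem_lt {d : ℕ} (hd : d < σ.D) :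
    (fList σ)[d]'(by rw [fList_length]; omega) = σ.D + 1 + conjAt (alphaOf σ) d := by
  simp only [fList]
  rw [List.getElem_append_left (by simpa using hd)]
  simp

lemma fList_getElem_ge {d : ℕ} (hd1 : σ.D ≤ d) (hd2 : d < σ.D + σ.bot.length) :
    (fList σ)[d]'(by rw [fList_length]; omega) =
      σ.bot[d - σ.D]'(by omega) / 2 + 1 := by
  simp only [fList]
  rw [List.getElem_append_right (by simpa using hd1)]
  simp

lemma fList_dur : dur (fList σ) = σ.D := by
  have hlen := fList_length σ
  have hs := fList_sorted σ
  have hiff : ∀ d, d < dur (fList σ) ↔ d < σ.D := by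
    intro d
    rw [lt_dur_iff hs]
    constructor
    · rintro ⟨h1, h2⟩
      by_contra hc
      push_neg at hc
      have h3 : (fList σ).getD d 0 = σ.bot[d - σ.D]'(by omega) / 2 + 1 := by
        rw [List.getD_eq_getElem _ _ h1]
        exact fList_getElem_ge σ hc (by omega)
      have h4 := σ.bot_le _ (List.getElem_mem (show d - σ.D < σ.bot.length by omega))
      omega
    · intro hd
      have h3 : (fList σ).getD d 0 = σ.D + 1 + conjAt (alphaOf σ) d := by
        rw [List.getD_eq_getElem _ _ (by omega)]
        exact fList_getElem_lt σ hd
      exact ⟨by omega, by omega⟩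
  have h1 := hiff (dur (fList σ))
  have h2 := hiff σ.D
  omega

lemma conjAt_fList (i : ℕ) :
    conjAt (fList σ) (σ.D + 1 + i) =
      conjAt ((List.range σ.D).map (fun d => conjAt (alphaOf σ) d)) i := by
  rw [fList, conjAt, List.countP_append]
  have h2 : (σ.bot.map (fun b => b / 2 + 1)).countP
      (fun x => decide (σ.D + 1 + i < x)) = 0 := by
    rw [List.countP_eq_zero]
    intro x hx
    obtain ⟨b, hb, rfl⟩ := List.mem_map.mp hx
    have := σ.bot_le b hb
    simp only [decide_eq_true_eq, not_lt]
    omega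
  rw [h2, Nat.add_zero, conjAt, List.countP_map, List.countP_map]
  apply List.countP_congr
  intro d _
  simp only [Function.comp_apply, decide_eq_true_eq]
  omega

/-- columns of the forward list recover the top entries. -/
lemma conjAt_fList_top {i : ℕ} (hi : i < σ.top.length) :
    2 * conjAt (fList σ) (σ.D + 1 + i) + 1 = σ.top[i] := by
  rw [conjAt_fList]
  rw [conj_conj (alpha_sorted σ) (alpha_le σ) (by rw [alpha_length]; exact hi)]
  rw [alpha_getElem σ hi]
  obtain ⟨c, hc⟩ := σ.top_odd _ (List.getElem_mem hi)
  omega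

lemma fList_headD (hpos : 0 < (fList σ).sum) :
    (fList σ).headD 0 = σ.D + 1 + conjAt (alphaOf σ) 0 := by
  rcases Nat.eq_zero_or_pos σ.D with hD | hD
  · have halpha : conjAt (alphaOf σ) 0 = 0 := by
      apply conjAt_eq_zero
      intro x hx
      have := alpha_le σ x hx
      omega
    rw [halpha, hD]
    have hbot : σ.bot ≠ [] := by
      intro hb
      rw [fList, hD, hb] at hpos
      simp at hpos
    obtain ⟨b, rest, hbr⟩ := List.exists_cons_of_ne_nil hbot
    have hb1 : b = 1 := by
      have h1 := σ.bot_le b (by rw [hbr]; exact List.mem_cons_self)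
      have h2 := σ.bot_odd b (by rw [hbr]; exact List.mem_cons_self)
      rw [hD] at h1
      obtain ⟨c, hc⟩ := h2
      omega
    rw [fList, hD, hbr, hb1]
    simp
  · have hr : List.range σ.D = 0 :: List.map Nat.succ (List.range (σ.D - 1)) := by
      rw [← List.range_succ_eq_map]
      congr 1
      omega
    simp [fList, hr]

end NZeroAux3


namespace NZeroAux4
open NZeroAux NZeroAux2

lemma headD_eq_getD_zero (L : List ℕ) : L.headD 0 = L.getD 0 0 := by
  cases L <;> simp

lemma headD_mem {L : List ℕ} (h : L ≠ []) : L.headD 0 ∈ L := by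
  cases L with
  | nil => exact absurd rfl h
  | cons a t => simp

lemma sum_map_two_sub_one {M : List ℕ} (h : ∀ x ∈ M, 0 < x) :
    (M.map (fun r => 2 * r - 1)).sum + M.length = 2 * M.sum := by
  induction M with
  | nil => simp
  | cons a t ih =>
    have ha := h a (List.mem_cons_self)
    have := ih (fun x hx => h x (List.mem_cons_of_mem _ hx))
    simp only [List.map_cons, List.sum_cons, List.length_cons]
    omega

lemma sum_map_sub {M : List ℕ} {c : ℕ} (h : ∀ x ∈ M, c ≤ x) :
    (M.map (· - c)).sum + c * M.length = M.sum := by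
  induction M with
  | nil => simp
  | cons a t ih =>
    have ha := h a (List.mem_cons_self)
    have := ih (fun x hx => h x (List.mem_cons_of_mem _ hx))
    simp only [List.map_cons, List.sum_cons, List.length_cons]
    have : c * (t.length + 1) = c * t.length + c := by ring
    omega

variable {L : List ℕ}

section SortedL
variable (hL : L.Pairwise (· ≥ ·))

include hL

lemma drop_le_dur_succ : ∀ r ∈ L.drop (dur L), r ≤ dur L + 1 := by
  intro r hr
  obtain ⟨i, hi, rfl⟩ := List.mem_iff_getElem.mp hr
  have hlen : dur L < L.length := by
    rw [List.length_drop] at hi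
    omega
  have hi2 : dur L + i < L.length := by
    rw [List.length_drop] at hi
    omega
  have h0 : (List.drop (dur L) L)[i] = L[dur L + i]'hi2 := List.getElem_drop
  rw [h0]
  have h1 : L[dur L + i]'hi2 ≤ L[dur L]'hlen := sorted_le hL (by omega) hi2
  have h2 := not_dur_succ hL hlen
  rw [List.getD_eq_getElem _ _ hlen] at h2
  omega

lemma take_ge_dur_succ : ∀ r ∈ L.take (dur L), dur L + 1 ≤ r := by
  intro r hr
  obtain ⟨i, hi, rfl⟩ := List.mem_iff_getElem.mp hr
  have hi' : i < dur L := by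
    rw [List.length_take] at hi
    omega
  rw [List.getElem_take]
  have := dur_entry_ge hL hi'
  rw [List.getD_eq_getElem _ _ (by have := dur_le_length L; rw [List.length_take] at hi; omega)] at this
  exact this

lemma conjAt_dur_succ_le : conjAt L (dur L + 1) ≤ dur L := by
  by_contra hc
  push_neg at hc
  have hlen : dur L < L.length := lt_of_lt_of_le hc (conjAt_le_length _ _)
  have h1 := (lt_conjAt_iff hL hlen (d := dur L + 1)).mp hc
  have h2 : dur L < dur L := by
    rw [lt_dur_iff hL]
    refine ⟨hlen, ?_⟩
    rw [List.getD_eq_getElem _ _ hlen]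
    omega
  omega

/-- shifted columns of `L` are the columns of the Durfee-stripped top part. -/
lemma conjAt_shift_take (i : ℕ) :
    conjAt L (dur L + 1 + i) = conjAt ((L.take (dur L)).map (· - (dur L + 1))) i := by
  have hMN : L.take (dur L) ++ L.drop (dur L) = L := List.take_append_drop _ _
  have h1 : conjAt L (dur L + 1 + i)
      = (L.take (dur L)).countP (fun x => decide (dur L + 1 + i < x))
        + (L.drop (dur L)).countP (fun x => decide (dur L + 1 + i < x)) := by
    rw [conjAt, ← List.countP_append, hMN]
  have h2 : (L.drop (dur L)).countP (fun x => decide (dur L + 1 + i < x)) = 0 := by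
    rw [List.countP_eq_zero]
    intro x hx
    have := drop_le_dur_succ hL x hx
    simp only [decide_eq_true_eq, not_lt]
    omega
  rw [h1, h2, Nat.add_zero, conjAt, List.countP_map]
  apply List.countP_congr
  intro x hx
  have := take_ge_dur_succ hL x hx
  simp only [Function.comp_apply, decide_eq_true_eq]
  omega

lemma head_eq_dur_add (hne : L ≠ []) (hpos : ∀ x ∈ L, 0 < x) :
    L.headD 0 = dur L + 1 + (L.headD 0 - (dur L + 1)) := by
  have hlen : 0 < L.length := List.length_pos_iff.mpr hne
  rcases Nat.eq_zero_or_pos (dur L) with hd | hd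
  · have h1 : ¬ (0 < dur L) := by omega
    rw [lt_dur_iff hL] at h1
    push_neg at h1
    have h2 := h1 hlen
    have h3 : 0 < L.headD 0 := hpos _ (headD_mem hne)
    rw [headD_eq_getD_zero] at *
    omega
  · have := dur_entry_ge hL (show 0 < dur L from hd)
    rw [headD_eq_getD_zero]
    omega

end SortedL

end NZeroAux4


namespace NZeroAux5
open NZeroAux NZeroAux2 NZeroAux3 NZeroAux4

variable (k : ℕ) (L : List ℕ)

def c0 : ℕ := L.headD 0 - (dur L + 1)

def gs : ℕ := k + c0 L

def gTop : List ℕ :=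
  (List.range (gs k L)).map (fun i => 2 * conjAt L (dur L + 1 + i) + 1)

def gBot : List ℕ := (L.drop (dur L)).map (fun r => 2 * r - 1)

lemma gTop_length : (gTop k L).length = gs k L := by simp [gTop]

lemma gBot_length : (gBot L).length = L.length - dur L := by simp [gBot]

lemma entries_le (hL : L.Pairwise (· ≥ ·)) : ∀ r ∈ L, r ≤ (dur L + 1) + gs k L := by
  intro r hr
  have h1 := mem_le_headD hL hr
  have h2 : L.headD 0 ≤ dur L + 1 + c0 L := by
    rw [c0]; omega
  rw [gs]; omega

lemma gTop_sorted : (gTop k L).Pairwise (· ≥ ·) := by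
  apply List.pairwise_map.mpr
  apply List.Pairwise.imp ?_ List.pairwise_lt_range
  intro d e hde
  have := conjAt_anti L (show dur L + 1 + d ≤ dur L + 1 + e by omega)
  omega

lemma gTop_odd : ∀ x ∈ gTop k L, Odd x := by
  intro x hx
  obtain ⟨i, _, rfl⟩ := List.mem_map.mp hx
  exact ⟨conjAt L (dur L + 1 + i), by ring⟩

lemma gTop_le (hL : L.Pairwise (· ≥ ·)) : ∀ x ∈ gTop k L, x ≤ 2 * dur L + 1 := by
  intro x hx
  obtain ⟨i, _, rfl⟩ := List.mem_map.mp hx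
  have h1 : conjAt L (dur L + 1 + i) ≤ conjAt L (dur L + 1) := conjAt_anti L (by omega)
  have h2 := conjAt_dur_succ_le hL
  omega

lemma gBot_sorted (hL : L.Pairwise (· ≥ ·)) : (gBot L).Pairwise (· ≥ ·) := by
  apply List.pairwise_map.mpr
  apply List.Pairwise.imp ?_ (List.Pairwise.sublist (List.drop_sublist (dur L) L) hL)
  intro a b hab
  omega

lemma gBot_odd (hpos : ∀ x ∈ L, 0 < x) : ∀ x ∈ gBot L, Odd x := by
  intro x hx
  obtain ⟨r, hr, rfl⟩ := List.mem_map.mp hx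
  have := hpos r (List.mem_of_mem_drop hr)
  exact ⟨r - 1, by omega⟩

lemma gBot_le (hL : L.Pairwise (· ≥ ·)) : ∀ x ∈ gBot L, x ≤ 2 * dur L + 1 := by
  intro x hx
  obtain ⟨r, hr, rfl⟩ := List.mem_map.mp hx
  have := drop_le_dur_succ hL r hr
  omega

lemma gTop_sum (hL : L.Pairwise (· ≥ ·)) :
    (gTop k L).sum = 2 * (L.map (· - (dur L + 1))).sum + gs k L := by
  have h1 : (gTop k L).sum =
      ∑ i ∈ Finset.range (gs k L), (2 * conjAt L (dur L + 1 + i) + 1) := by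
    rw [gTop, list_sum_map_range]
  rw [h1, Finset.sum_add_distrib, Finset.sum_const, Finset.card_range, smul_eq_mul,
    mul_one, ← Finset.mul_sum]
  rw [sum_conjAt_shift L (dur L + 1) (gs k L) (entries_le k L hL)]

lemma gBot_sum (hpos : ∀ x ∈ L, 0 < x) :
    (gBot L).sum + (L.length - dur L) = 2 * (L.drop (dur L)).sum := by
  have h := sum_map_two_sub_one (M := L.drop (dur L))
    (fun x hx => hpos x (List.mem_of_mem_drop hx))
  rw [gBot]
  rw [List.length_drop] at h
  exact h

lemma map_sub_sum (hL : L.Pairwise (· ≥ ·)) :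
    (L.map (· - (dur L + 1))).sum + (dur L + 1) * dur L + (L.drop (dur L)).sum
      = L.sum := by
  have hMN : L.take (dur L) ++ L.drop (dur L) = L := List.take_append_drop _ _
  have h1 : (L.map (· - (dur L + 1))).sum =
      ((L.take (dur L)).map (· - (dur L + 1))).sum +
        ((L.drop (dur L)).map (· - (dur L + 1))).sum := by
    rw [← List.sum_append, ← List.map_append, hMN]
  have h2 : ((L.drop (dur L)).map (· - (dur L + 1))).sum = 0 := by
    apply List.sum_eq_zero
    intro x hx
    obtain ⟨r, hr, rfl⟩ := List.mem_map.mp hx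
    have := drop_le_dur_succ hL r hr
    omega
  have h3 := sum_map_sub (take_ge_dur_succ hL)
  have h4 : (L.take (dur L)).length = dur L := by
    rw [List.length_take]
    exact min_eq_left (dur_le_length L)
  have h5 : (L.take (dur L)).sum + (L.drop (dur L)).sum = L.sum := by
    rw [← List.sum_append, hMN]
  rw [h4] at h3
  omega

lemma big_sum (hL : L.Pairwise (· ≥ ·)) (hpos : ∀ x ∈ L, 0 < x) :
    (gTop k L).sum + (gBot L).sum + 2 * dur L ^ 2 + 2 * dur L + 1 + (L.length - dur L)
      = 2 * L.sum + gs k L + 1 := by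
  have h1 := gTop_sum k L hL
  have h2 := gBot_sum L hpos
  have h3 := map_sub_sum L hL
  have h4 : dur L ^ 2 = dur L * dur L := sq _
  have h5 : (dur L + 1) * dur L = dur L * dur L + dur L := by ring
  omega

/-- The inverse construction: an odd Durfee symbol from a sorted positive list. -/
def gSym (n : ℕ) (m : ℤ) (jn : ℕ) (hn : (n : ℤ) = 2 * jn + m + 1)
    (hL : L.Pairwise (· ≥ ·)) (hpos : ∀ x ∈ L, 0 < x) (hsum : L.sum = jn)
    (hne : L ≠ []) (hrk : (L.headD 0 : ℤ) - L.length = m + 1 - k) :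
    OddDurfeeSymbol n where
  D := dur L
  top := gTop k L
  bot := gBot L
  top_sorted := gTop_sorted k L
  bot_sorted := gBot_sorted L hL
  top_odd := gTop_odd k L
  bot_odd := gBot_odd L hpos
  top_le := gTop_le k L hL
  bot_le := gBot_le L hL
  sum_eq := by
    have h1 := big_sum k L hL hpos
    have h2 := head_eq_dur_add hL hne hpos
    have h3 := dur_le_length L
    have hc0 : L.headD 0 = dur L + 1 + c0 L := by rw [c0] at *; omega
    have hgs : gs k L = k + c0 L := rfl
    rw [hsum] at h1
    omega

lemma gSym_rank (n : ℕ) (m : ℤ) (jn : ℕ) (hn : (n : ℤ) = 2 * jn + m + 1)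
    (hL : L.Pairwise (· ≥ ·)) (hpos : ∀ x ∈ L, 0 < x) (hsum : L.sum = jn)
    (hne : L ≠ []) (hrk : (L.headD 0 : ℤ) - L.length = m + 1 - k) :
    oddRank (gSym k L n m jn hn hL hpos hsum hne hrk) = m := by
  rw [oddRank, gSym]
  simp only [gTop_length, gBot_length]
  have h2 := head_eq_dur_add hL hne hpos
  have h3 := dur_le_length L
  have hc0 : L.headD 0 = dur L + 1 + c0 L := by rw [c0] at *; omega
  have hgs : gs k L = k + c0 L := rfl
  omega

end NZeroAux5


namespace NZeroAux6
open NZeroAux NZeroAux2 NZeroAux3 NZeroAux4 NZeroAux5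

variable (k : ℕ) (L : List ℕ)

lemma alpha_gTop : (gTop k L).map (· / 2)
    = (List.range (gs k L)).map (fun i => conjAt L (dur L + 1 + i)) := by
  rw [gTop, List.map_map]
  apply List.map_congr_left
  intro i _
  simp only [Function.comp_apply]
  omega

variable {L} (hL : L.Pairwise (· ≥ ·)) (hpos : ∀ x ∈ L, 0 < x) (hne : L ≠ [])

include hL hpos hne in
lemma conjAt_alpha_zero : conjAt ((gTop k L).map (· / 2)) 0 = c0 L := by
  rw [alpha_gTop, conjAt, List.countP_map]
  have hhead := head_eq_dur_add hL hne hpos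
  have hc : ∀ i ∈ List.range (gs k L),
      ((fun x => decide (0 < x)) ∘ fun i => conjAt L (dur L + 1 + i)) i = true ↔
        (fun i => decide (i < c0 L)) i = true := by
    intro i _
    simp only [Function.comp_apply, decide_eq_true_eq]
    rw [conjAt_pos_iff]
    constructor
    · rintro ⟨x, hx, hlt⟩
      have := mem_le_headD hL hx
      rw [c0]
      omega
    · intro hi
      refine ⟨L.headD 0, headD_mem hne, ?_⟩
      rw [c0] at hi
      omega
  rw [List.countP_congr hc, countP_range_lt]
  have : c0 L ≤ gs k L := by rw [gs]; omega
  omega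

def Mstar : List ℕ := (L.take (dur L)).map (· - (dur L + 1))

include hL in
lemma Mstar_sorted : (Mstar (L := L)).Pairwise (· ≥ ·) := by
  apply List.pairwise_map.mpr
  apply List.Pairwise.imp ?_ (List.Pairwise.sublist (List.take_sublist _ _) hL)
  intro a b hab
  omega

lemma Mstar_length : (Mstar (L := L)).length = dur L := by
  rw [Mstar, List.length_map, List.length_take]
  exact min_eq_left (dur_le_length L)

include hL hne hpos in
lemma Mstar_le : ∀ x ∈ Mstar (L := L), x ≤ gs k L := by
  intro x hx
  rw [Mstar] at hx
  obtain ⟨r, hr, rfl⟩ := List.mem_map.mp hx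
  have h1 := mem_le_headD hL (List.mem_of_mem_take hr)
  have h2 := head_eq_dur_add hL hne hpos
  have : c0 L ≤ gs k L := by rw [gs]; omega
  rw [c0] at *
  omega

include hL in
lemma Mstar_getElem {d : ℕ} (hd : d < dur L) :
    (Mstar (L := L))[d]'(by rw [Mstar_length]; exact hd)
      = L[d]'(lt_of_lt_of_le hd (dur_le_length L)) - (dur L + 1) := by
  simp only [Mstar]
  rw [List.getElem_map, List.getElem_take]

include hL hpos hne in
lemma conjAt_alpha_d {d : ℕ} (hd : d < dur L) :
    dur L + 1 + conjAt ((gTop k L).map (· / 2)) d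
      = L[d]'(lt_of_lt_of_le hd (dur_le_length L)) := by
  have h1 : (gTop k L).map (· / 2) = (List.range (gs k L)).map
      (fun i => conjAt (Mstar (L := L)) i) := by
    rw [alpha_gTop]
    apply List.map_congr_left
    intro i _
    rw [conjAt_shift_take hL, Mstar]
  rw [h1]
  have h2 := conj_conj (Mstar_sorted hL) (Mstar_le k hL hpos hne)
    (i := d) (by rw [Mstar_length]; exact hd)
  rw [h2, Mstar_getElem hL hd]
  have h3 := dur_entry_ge hL hd
  rw [List.getD_eq_getElem _ _ (lt_of_lt_of_le hd (dur_le_length L))] at h3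
  omega

include hpos in
lemma gBot_unmap : (gBot L).map (fun b => b / 2 + 1) = L.drop (dur L) := by
  rw [gBot, List.map_map]
  have : ∀ r ∈ L.drop (dur L), ((fun b => b / 2 + 1) ∘ fun r => 2 * r - 1) r = id r := by
    intro r hr
    have := hpos r (List.mem_of_mem_drop hr)
    simp only [Function.comp_apply, id_eq]
    omega
  rw [List.map_congr_left this, List.map_id]

end NZeroAux6


namespace NZeroMain
open NZeroAux NZeroAux2 NZeroAux3 NZeroAux4 NZeroAux5

variable {n jn : ℕ} {m : ℤ}

def kOf {n : ℕ} (σ : OddDurfeeSymbol n) : ℕ := σ.top.length - conjAt (alphaOf σ) 0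

lemma top_length_lt {n : ℕ} (hn : 1 ≤ n) (σ : OddDurfeeSymbol n) : σ.top.length < n := by
  have h1 : σ.top.length ≤ σ.top.sum := by
    apply length_le_sum
    intro x hx
    obtain ⟨c, hc⟩ := σ.top_odd x hx
    omega
  have h2 := σ.sum_eq
  omega

lemma c0f_le {n : ℕ} (σ : OddDurfeeSymbol n) : conjAt (alphaOf σ) 0 ≤ σ.top.length := by
  have := conjAt_le_length (alphaOf σ) 0
  rw [alpha_length] at this
  exact this

lemma fList_sum_eq (hj : (n : ℤ) = 2 * jn + m + 1)
    (σ : OddDurfeeSymbol n) (hσ : oddRank σ = m) : (fList σ).sum = jn := by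
  have h1 := fList_sum σ
  rw [oddRank] at hσ
  omega

/-- The forward map. -/
def FS (hn : 1 ≤ n) (hj : (n : ℤ) = 2 * jn + m + 1) (hjn : 1 ≤ jn)
    (x : {σ : OddDurfeeSymbol n // oddRank σ = m}) :
    {p : Fin n × Nat.Partition jn // partitionRank p.2 = m + 1 - ((p.1 : ℕ) : ℤ)} := by
  refine ⟨(⟨kOf x.1, ?_⟩, ⟨(fList x.1 : Multiset ℕ), ?_, ?_⟩), ?_⟩
  · have h1 := top_length_lt hn x.1
    have h2 := c0f_le x.1
    rw [kOf]
    omega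
  · intro i hi
    exact fList_pos x.1 i (by exact_mod_cast hi)
  · rw [Multiset.sum_coe]
    exact fList_sum_eq hj x.1 x.2
  · -- rank property
    rw [partitionRank]
    simp only
    rw [Multiset.coe_card, sup_coe_sorted (fList_sorted x.1)]
    have hsum : (fList x.1).sum = jn := fList_sum_eq hj x.1 x.2
    have hhead := fList_headD x.1 (by omega)
    have hlen := fList_length x.1
    have hrk := x.2
    rw [oddRank] at hrk
    have hc0 := c0f_le x.1
    have hk : kOf x.1 = x.1.top.length - conjAt (alphaOf x.1) 0 := rfl
    omega

def LOf {jn : ℕ} (P : Nat.Partition jn) : List ℕ := P.parts.sort (· ≥ ·)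

lemma LOf_sorted {jn : ℕ} (P : Nat.Partition jn) : (LOf P).Pairwise (· ≥ ·) :=
  Multiset.pairwise_sort _ _

lemma LOf_pos {jn : ℕ} (P : Nat.Partition jn) : ∀ x ∈ LOf P, 0 < x := by
  intro x hx
  exact P.parts_pos (by rwa [← Multiset.mem_sort (· ≥ ·)])

lemma LOf_sum {jn : ℕ} (P : Nat.Partition jn) : (LOf P).sum = jn := by
  rw [← Multiset.sum_coe, LOf, Multiset.sort_eq, P.parts_sum]

lemma LOf_ne {jn : ℕ} (hjn : 1 ≤ jn) (P : Nat.Partition jn) : LOf P ≠ [] := by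
  intro h
  have := LOf_sum P
  rw [h] at this
  simp at this
  omega

lemma LOf_rank {jn : ℕ} (P : Nat.Partition jn) :
    partitionRank P = ((LOf P).headD 0 : ℤ) - (LOf P).length := by
  rw [partitionRank]
  have h1 : P.parts = ↑(LOf P) := (Multiset.sort_eq _ _).symm
  rw [h1, Multiset.coe_card, sup_coe_sorted (LOf_sorted P)]

/-- The inverse map. -/
def GS (hj : (n : ℤ) = 2 * jn + m + 1) (hjn : 1 ≤ jn)
    (y : {p : Fin n × Nat.Partition jn // partitionRank p.2 = m + 1 - ((p.1 : ℕ) : ℤ)}) :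
    {σ : OddDurfeeSymbol n // oddRank σ = m} :=
  ⟨gSym (y.1.1 : ℕ) (LOf y.1.2) n m jn hj (LOf_sorted _) (LOf_pos _) (LOf_sum _)
      (LOf_ne hjn _) (by rw [← LOf_rank]; exact y.2),
    gSym_rank _ _ _ _ _ _ _ _ _ _ _⟩

end NZeroMain


namespace NZeroMain2
open NZeroAux NZeroAux2 NZeroAux3 NZeroAux4 NZeroAux5 NZeroAux6 NZeroMain

variable {n jn : ℕ} {m : ℤ}

lemma odf_ext {n : ℕ} {σ τ : OddDurfeeSymbol n} (hD : σ.D = τ.D) (ht : σ.top = τ.top)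
    (hb : σ.bot = τ.bot) : σ = τ := by
  cases σ; cases τ; simp_all

lemma GS_FS (hn : 1 ≤ n) (hj : (n : ℤ) = 2 * jn + m + 1) (hjn : 1 ≤ jn)
    (x : {σ : OddDurfeeSymbol n // oddRank σ = m}) : GS hj hjn (FS hn hj hjn x) = x := by
  obtain ⟨σ, hσ⟩ := x
  apply Subtype.ext
  have hLL : LOf (FS hn hj hjn ⟨σ, hσ⟩).1.2 = fList σ := by
    apply List.Perm.eq_of_pairwise' (LOf_sorted _) (fList_sorted σ) ?_
    apply Multiset.coe_eq_coe.mp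
    rw [LOf, Multiset.sort_eq]
    rfl
  have hsum : (fList σ).sum = jn := fList_sum_eq hj σ hσ
  have hhead := fList_headD σ (by omega)
  have hkk : (FS hn hj hjn ⟨σ, hσ⟩).1.1.1 = kOf σ := rfl
  have hc0 : c0 (fList σ) = conjAt (alphaOf σ) 0 := by
    rw [c0, hhead, fList_dur]
    omega
  have hgs : gs (kOf σ) (fList σ) = σ.top.length := by
    have hle := c0f_le σ
    rw [gs, hc0, kOf]
    omega
  apply odf_ext
  · show dur (LOf (FS hn hj hjn ⟨σ, hσ⟩).1.2) = σ.D
    rw [hLL, fList_dur]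
  · show gTop (FS hn hj hjn ⟨σ, hσ⟩).1.1.1 (LOf (FS hn hj hjn ⟨σ, hσ⟩).1.2) = σ.top
    rw [hLL, hkk]
    apply List.ext_getElem
    · rw [gTop_length, hgs]
    · intro i h1 h2
      have h3 : i < σ.top.length := h2
      simp only [gTop]
      rw [List.getElem_map, List.getElem_range, fList_dur]
      exact conjAt_fList_top σ h3
  · show gBot (LOf (FS hn hj hjn ⟨σ, hσ⟩).1.2) = σ.bot
    rw [hLL, gBot, fList_dur]
    have hd : (fList σ).drop σ.D = σ.bot.map (fun b => b / 2 + 1) := by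
      simp only [fList]
      apply List.drop_left'
      simp
    rw [hd, List.map_map]
    have : ∀ b ∈ σ.bot, ((fun r => 2 * r - 1) ∘ fun b => b / 2 + 1) b = id b := by
      intro b hb
      obtain ⟨c, hc⟩ := σ.bot_odd b hb
      simp only [Function.comp_apply, id_eq]
      omega
    rw [List.map_congr_left this, List.map_id]

lemma FS_GS (hn : 1 ≤ n) (hj : (n : ℤ) = 2 * jn + m + 1) (hjn : 1 ≤ jn)
    (y : {p : Fin n × Nat.Partition jn // partitionRank p.2 = m + 1 - ((p.1 : ℕ) : ℤ)}) :
    FS hn hj hjn (GS hj hjn y) = y := by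
  obtain ⟨⟨kf, P⟩, hy⟩ := y
  set L : List ℕ := LOf P with hLdef
  have hL : L.Pairwise (· ≥ ·) := LOf_sorted P
  have hpos : ∀ x ∈ L, 0 < x := LOf_pos P
  have hne : L ≠ [] := LOf_ne hjn P
  set σ : OddDurfeeSymbol n := (GS hj hjn ⟨(kf, P), hy⟩).1 with hσdef
  have hD : σ.D = dur L := rfl
  have hT : σ.top = gTop (kf : ℕ) L := rfl
  have hB : σ.bot = gBot L := rfl
  have hA : alphaOf σ = (gTop (kf : ℕ) L).map (· / 2) := rfl
  have hkk : kOf σ = (kf : ℕ) := by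
    rw [kOf, hA, hT, gTop_length, conjAt_alpha_zero (kf : ℕ) hL hpos hne, gs]
    omega
  have hfl : fList σ = L := by
    have h1 : fList σ = ((List.range (dur L)).map
        (fun d => dur L + 1 + conjAt (alphaOf σ) d)) ++ (gBot L).map (fun b => b / 2 + 1) := by
      rw [fList, hD, hB]
    rw [h1, gBot_unmap hpos]
    have h2 : (List.range (dur L)).map (fun d => dur L + 1 + conjAt (alphaOf σ) d)
        = L.take (dur L) := by
      apply List.ext_getElem
      · rw [List.length_map, List.length_range, List.length_take]
        exact (min_eq_left (dur_le_length L)).symm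
      · intro d h1' h2'
        have hd : d < dur L := by simpa using h1'
        rw [List.getElem_map, List.getElem_range, List.getElem_take]
        rw [hA]
        exact conjAt_alpha_d (kf : ℕ) hL hpos hne hd
    rw [h2, List.take_append_drop]
  apply Subtype.ext
  show ((⟨kOf σ, _⟩ : Fin n), (⟨(fList σ : Multiset ℕ), _, _⟩ : Nat.Partition jn)) = (kf, P)
  have hfin : (⟨kOf σ, by rw [hkk]; exact kf.2⟩ : Fin n) = kf := by
    apply Fin.ext
    exact hkk
  have hpart : (⟨(fList σ : Multiset ℕ), by
      intro i hi
      exact fList_pos σ i (by exact_mod_cast hi), by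
      rw [Multiset.sum_coe]
      exact fList_sum_eq hj σ (GS hj hjn ⟨(kf, P), hy⟩).2⟩ : Nat.Partition jn) = P := by
    apply Nat.Partition.ext
    show (fList σ : Multiset ℕ) = P.parts
    rw [hfl, hLdef, LOf, Multiset.sort_eq]
  exact Prod.ext_iff.mpr ⟨hfin, hpart⟩

end NZeroMain2


/-- For integers `n ≥ 1` and `m` with `n ≡ m+1 (mod 2)` and `n ≠ m+1`,
`N⁰(m,n) = Σ_{k=0}^{n−1} N(m+1−k,(n−m−1)/2)`. -/
theorem N0_eq_sum_rankCount (n : ℕ) (hn : 1 ≤ n) (m : ℤ)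
    (hpar : (n : ℤ) ≡ m + 1 [ZMOD 2]) (hne : (n : ℤ) ≠ m + 1) :
    N0 m n = ∑ k ∈ Finset.range n, rankCountZ (m + 1 - (k : ℤ)) (((n : ℤ) - m - 1) / 2) := by
  classical
  have hp : (n : ℤ) % 2 = (m + 1) % 2 := hpar
  by_cases hlt : (n : ℤ) < m + 1
  · -- degenerate case: both sides are zero
    have hR : ∀ k ∈ Finset.range n, rankCountZ (m + 1 - (k : ℤ)) (((n : ℤ) - m - 1) / 2) = 0 := by
      intro k _
      rw [rankCountZ, if_neg]
      omega
    rw [Finset.sum_eq_zero hR, N0, Nat.card_eq_zero]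
    left
    refine ⟨fun x => ?_⟩
    obtain ⟨σ, hσ⟩ := x
    have h1 : σ.top.length < n := NZeroMain.top_length_lt hn σ
    rw [oddRank] at hσ
    omega
  · push_neg at hlt
    have hmn : m + 1 < (n : ℤ) := lt_of_le_of_ne hlt (Ne.symm hne)
    have hjz0 : 0 ≤ ((n : ℤ) - m - 1) / 2 := by omega
    have hjdef : ((((n : ℤ) - m - 1) / 2).toNat : ℤ) = ((n : ℤ) - m - 1) / 2 :=
      Int.toNat_of_nonneg hjz0
    set jn : ℕ := (((n : ℤ) - m - 1) / 2).toNat with hjndef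
    have hj : (n : ℤ) = 2 * jn + m + 1 := by omega
    have hjn : 1 ≤ jn := by omega
    have hR : ∀ k ∈ Finset.range n, rankCountZ (m + 1 - (k : ℤ)) (((n : ℤ) - m - 1) / 2)
        = rankCount (m + 1 - (k : ℤ)) jn := by
      intro k _
      rw [rankCountZ, if_pos hjz0]
    rw [Finset.sum_congr rfl hR, N0]
    have hcard : Nat.card {σ : OddDurfeeSymbol n // oddRank σ = m}
        = Nat.card {p : Fin n × Nat.Partition jn //
            partitionRank p.2 = m + 1 - ((p.1 : ℕ) : ℤ)} :=
      Nat.card_congr (Equiv.mk (NZeroMain.FS hn hj hjn) (NZeroMain.GS hj hjn)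
        (NZeroMain2.GS_FS hn hj hjn) (NZeroMain2.FS_GS hn hj hjn))
    rw [hcard]
    have e2 := Equiv.subtypeProdEquivSigmaSubtype
      (fun (k : Fin n) (P : Nat.Partition jn) => partitionRank P = m + 1 - ((k : ℕ) : ℤ))
    rw [Nat.card_congr e2, Nat.card_eq_fintype_card, Fintype.card_sigma,
      ← Fin.sum_univ_eq_sum_range (fun k => rankCount (m + 1 - (k : ℤ)) jn) n]
    apply Finset.sum_congr rfl
    intro k _
    rw [rankCount, Nat.card_eq_fintype_card]
end

section
/- Let n ≥ 1 and m be integers with n ≤ 3m+5 and n ≡ m+1 (mod 2). Then N⁰(m,n) = p((n−m−1)/2). -/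
/-- `p(j)`: the number of partitions of `j`, with `p(0) = 1` and `p(j) = 0` for `j < 0`. -/
noncomputable def partitionCountZ (j : ℤ) : ℕ :=
  if 0 ≤ j then Nat.card (Nat.Partition j.toNat) else 0


namespace ODAux


lemma sum_map_add {α} (l : List α) (f g : α → ℕ) :
    (l.map (fun i => f i + g i)).sum = (l.map f).sum + (l.map g).sum := by
  induction l with
  | nil => simp
  | cons a l ih => simp [ih]; ring

lemma map_map_self {α β} (A : List α) (f : α → β) (g : β → α)
    (h : ∀ a ∈ A, g (f a) = a) : (A.map f).map g = A := by
  rw [List.map_map]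
  conv_rhs => rw [← List.map_id A]
  exact List.map_congr_left h

lemma length_mul_le_sum (l : List ℕ) (c : ℕ) (h : ∀ x ∈ l, c ≤ x) :
    l.length * c ≤ l.sum := by
  induction l with
  | nil => simp
  | cons a l ih =>
    simp only [List.length_cons, List.sum_cons]
    have := ih (fun x hx => h x (List.mem_cons_of_mem _ hx))
    have := h a (List.mem_cons_self)
    nlinarith

lemma sum_map_sub (l : List ℕ) (c : ℕ) (h : ∀ x ∈ l, c ≤ x) :
    (l.map (fun x => x - c)).sum + l.length * c = l.sum := by
  induction l with
  | nil => simp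
  | cons a l ih =>
    simp only [List.map_cons, List.sum_cons, List.length_cons]
    have h1 := ih (fun x hx => h x (List.mem_cons_of_mem _ hx))
    have h2 := h a (List.mem_cons_self)
    have : a - c + c = a := Nat.sub_add_cancel h2
    rw [Nat.succ_mul]
    omega

lemma mem_le_sum_sub (l : List ℕ) (c x : ℕ) (hx : x ∈ l) (h : ∀ y ∈ l, c ≤ y) :
    x + (l.length - 1) * c ≤ l.sum := by
  classical
  have hp : l.Perm (x :: l.erase x) := List.perm_cons_erase hx
  have hs : l.sum = x + (l.erase x).sum := by
    rw [hp.sum_eq]; simp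
  have hlen : (l.erase x).length = l.length - 1 := by
    rw [List.length_erase_of_mem hx]
  have hall : ∀ y ∈ l.erase x, c ≤ y := fun y hy => h y (List.mem_of_mem_erase hy)
  have := length_mul_le_sum _ c hall
  rw [hlen] at this
  omega

/-- Conjugate of a list of naturals (viewed as a partition), in a box of height `D`. -/
def conjBox (L : List ℕ) (D : ℕ) : List ℕ :=
  (List.range D).map (fun i => L.countP (fun a => decide (i + 1 ≤ a)))

@[simp] lemma length_conjBox (L : List ℕ) (D : ℕ) : (conjBox L D).length = D := by
  simp [conjBox]

lemma conjBox_sorted (L : List ℕ) (D : ℕ) : (conjBox L D).Pairwise (· ≥ ·) := by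
  unfold conjBox
  rw [List.pairwise_map]
  have : List.Pairwise (· < ·) (List.range D) := List.pairwise_lt_range (n := D)
  exact this.imp (fun {i j} hij => by
    exact List.countP_mono_left (fun x _ hx => by
      simp only [decide_eq_true_eq] at *; omega))

lemma mem_conjBox_le (L : List ℕ) (D : ℕ) (x : ℕ) (hx : x ∈ conjBox L D) :
    x ≤ L.length := by
  simp only [conjBox, List.mem_map] at hx
  obtain ⟨i, _, rfl⟩ := hx
  exact List.countP_le_length

lemma countP_range_le (v D : ℕ) :
    (List.range D).countP (fun i => decide (i + 1 ≤ v)) = min v D := by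
  induction D with
  | zero => simp
  | succ D ih =>
    rw [List.range_succ, List.countP_append, ih]
    simp only [List.countP_cons, List.countP_nil]
    split_ifs with h
    · simp only [decide_eq_true_eq] at h; omega
    · simp only [decide_eq_true_eq] at h; omega

lemma sum_map_range_ind (a D : ℕ) :
    ((List.range D).map (fun i => if i + 1 ≤ a then 1 else 0)).sum = min a D := by
  induction D with
  | zero => simp
  | succ D ih =>
    rw [List.range_succ, List.map_append, List.sum_append, ih]
    simp only [List.map_cons, List.map_nil, List.sum_cons, List.sum_nil]
    split_ifs with h <;> omega

lemma sum_conjBox (L : List ℕ) (D : ℕ) (h : ∀ x ∈ L, x ≤ D) :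
    (conjBox L D).sum = L.sum := by
  induction L with
  | nil => simp [conjBox]
  | cons a l ih =>
    have ha : a ≤ D := h a (List.mem_cons_self)
    have hl := ih (fun x hx => h x (List.mem_cons_of_mem _ hx))
    unfold conjBox at *
    have : ((List.range D).map (fun i => (a :: l).countP (fun x => decide (i + 1 ≤ x)))).sum
        = ((List.range D).map (fun i => l.countP (fun x => decide (i + 1 ≤ x)))).sum
          + ((List.range D).map (fun i => if i + 1 ≤ a then 1 else 0)).sum := by
      rw [← sum_map_add]
      congr 1
      apply List.map_congr_left
      intro i _
      rw [List.countP_cons]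
      simp [decide_eq_true_eq]
    rw [this, hl, sum_map_range_ind]
    simp only [List.sum_cons]
    omega

lemma countP_ge_iff (L : List ℕ) (hL : L.Pairwise (· ≥ ·)) (v : ℕ) (j : ℕ) (hj : j < L.length) :
    j + 1 ≤ L.countP (fun a => decide (v ≤ a)) ↔ v ≤ L.get ⟨j, hj⟩ := by
  induction L generalizing j with
  | nil => simp at hj
  | cons a l ih =>
    have hsort : l.Pairwise (· ≥ ·) := hL.of_cons
    have hle : ∀ x ∈ l, x ≤ a := fun x hx => List.rel_of_pairwise_cons hL hx
    rw [List.countP_cons]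
    cases j with
    | zero =>
      simp only [List.get]
      constructor
      · intro h1
        by_contra hva
        simp only [decide_eq_true_eq] at h1
        rw [if_neg (by simpa using hva)] at h1
        have : l.countP (fun a => decide (v ≤ a)) = 0 := by
          rw [List.countP_eq_zero]
          intro x hx
          simp only [decide_eq_true_eq]
          intro hvx
          exact hva (le_trans hvx (hle x hx))
        omega
      · intro h; rw [if_pos (by simpa using h)]; omega
    | succ j =>
      simp only [List.length_cons, Nat.succ_lt_succ_iff] at hj
      have hget : (a :: l).get ⟨j + 1, by simpa using hj⟩ = l.get ⟨j, hj⟩ := rfl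
      rw [hget, ← ih hsort j hj]
      split_ifs with h
      · omega
      · simp only [decide_eq_true_eq] at h
        have : l.countP (fun a => decide (v ≤ a)) = 0 := by
          rw [List.countP_eq_zero]
          intro x hx
          simp only [decide_eq_true_eq]
          intro hvx
          exact h (le_trans hvx (hle x hx))
        omega

lemma conjBox_conjBox (L : List ℕ) (D : ℕ) (hL : L.Pairwise (· ≥ ·))
    (hD : ∀ x ∈ L, x ≤ D) : conjBox (conjBox L D) L.length = L := by
  apply List.ext_get (by simp)
  intro j h1 h2
  have hj : j < L.length := h2
  have : (conjBox (conjBox L D) L.length).get ⟨j, h1⟩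
      = (conjBox L D).countP (fun c => decide (j + 1 ≤ c)) := by
    simp [conjBox]
  rw [this]
  unfold conjBox
  rw [List.countP_map]
  have : ((fun c => decide (j + 1 ≤ c)) ∘ fun i => L.countP fun a => decide (i + 1 ≤ a))
      = fun i => decide (j + 1 ≤ L.countP fun a => decide (i + 1 ≤ a)) := rfl
  rw [this]
  have hcongr : (List.range D).countP (fun i => decide (j + 1 ≤ L.countP fun a => decide (i + 1 ≤ a)))
      = (List.range D).countP (fun i => decide (i + 1 ≤ L.get ⟨j, hj⟩)) := by
    apply List.countP_congr
    intro i _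
    simp only [decide_eq_true_eq]
    constructor
    · intro h; exact (countP_ge_iff L hL (i+1) j hj).mp h
    · intro h; exact (countP_ge_iff L hL (i+1) j hj).mpr h
  rw [hcongr, countP_range_le]
  exact Nat.min_eq_left (hD _ (L.get_mem _))

/-- Size of the `d × (d+1)` Durfee rectangle, with offset `k`. -/
def durfee : List ℕ → ℕ → ℕ
  | [], _ => 0
  | a :: l, k => if k + 2 ≤ a then durfee l (k + 1) + 1 else 0

lemma durfee_le_length (L : List ℕ) (k : ℕ) : durfee L k ≤ L.length := by
  induction L generalizing k with
  | nil => simp [durfee]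
  | cons a l ih =>
    rw [durfee]
    split_ifs
    · simpa using Nat.succ_le_succ (ih (k+1))
    · simp

lemma durfee_get (L : List ℕ) (k : ℕ) (i : ℕ) (hi : i < durfee L k)
    (hlen : i < L.length) : k + i + 2 ≤ L[i] := by
  induction L generalizing k i with
  | nil => simp [durfee] at hi
  | cons a l ih =>
    simp only [durfee] at hi
    split_ifs at hi with h
    · cases i with
      | zero => simpa using h
      | succ i =>
        have := ih (k+1) i (by omega) (by simpa using hlen)
        simp only [List.getElem_cons_succ]
        omega
    · omega

lemma durfee_lt (L : List ℕ) (k : ℕ) (h : durfee L k < L.length) :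
    L[durfee L k]'h < k + durfee L k + 2 := by
  induction L generalizing k with
  | nil => simp at h
  | cons a l ih =>
    simp only [durfee] at h ⊢
    split_ifs at h ⊢ with hc
    · have := ih (k+1) (by simpa using h)
      simp only [List.getElem_cons_succ]
      omega
    · simpa using by omega

lemma durfee_append (R d : List ℕ) (k : ℕ)
    (hR : ∀ (i : ℕ) (h : i < R.length), k + i + 2 ≤ R[i])
    (hd : ∀ x, d.head? = some x → x < k + R.length + 2) :
    durfee (R ++ d) k = R.length := by
  induction R generalizing k with
  | nil =>
    cases d with
    | nil => rfl
    | cons a l =>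
      have ha : a < k + 2 := by simpa using hd a rfl
      simp only [List.nil_append, durfee, List.length_nil]
      rw [if_neg (by omega)]
  | cons r R' ih =>
    have h0 : k + 2 ≤ r := hR 0 (by simp)
    simp only [List.cons_append, durfee, List.length_cons]
    rw [if_pos (by omega)]
    congr 1
    apply ih (k+1)
    · intro i h
      have := hR (i+1) (by simpa using h)
      simp only [List.getElem_cons_succ] at this
      omega
    · intro x hx
      have := hd x hx
      simp only [List.length_cons] at this ⊢
      omega

lemma sum_map_addc (l : List ℕ) (c : ℕ) :
    (l.map (fun x => x + c)).sum = l.sum + l.length * c := by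
  induction l with
  | nil => simp
  | cons a l ih => simp [ih, Nat.succ_mul]; ring

lemma sum_two_mul_add_one (l : List ℕ) :
    (l.map (fun c => 2 * c + 1)).sum = 2 * l.sum + l.length := by
  induction l with
  | nil => simp
  | cons a l ih => simp [ih]; ring

lemma sum_two_mul_sub_one (l : List ℕ) (h : ∀ x ∈ l, 1 ≤ x) :
    (l.map (fun d => 2 * d - 1)).sum + l.length = 2 * l.sum := by
  induction l with
  | nil => simp
  | cons a l ih =>
    have h1 := h a (List.mem_cons_self)
    have h2 := ih (fun x hx => h x (List.mem_cons_of_mem _ hx))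
    simp only [List.map_cons, List.sum_cons, List.length_cons]
    omega

lemma sum_map_half_pred (l : List ℕ) (h : ∀ a ∈ l, Odd a) :
    l.sum = 2 * (l.map (fun a => (a - 1) / 2)).sum + l.length := by
  induction l with
  | nil => simp
  | cons a l ih =>
    obtain ⟨k, hk⟩ := h a (List.mem_cons_self)
    have h2 := ih (fun x hx => h x (List.mem_cons_of_mem _ hx))
    simp only [List.map_cons, List.sum_cons, List.length_cons]
    have : (a - 1) / 2 = k := by omega
    rw [this]
    omega

lemma sum_map_half_succ (l : List ℕ) (h : ∀ b ∈ l, Odd b) :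
    2 * (l.map (fun b => (b + 1) / 2)).sum = l.sum + l.length := by
  induction l with
  | nil => simp
  | cons a l ih =>
    obtain ⟨k, hk⟩ := h a (List.mem_cons_self)
    have h2 := ih (fun x hx => h x (List.mem_cons_of_mem _ hx))
    simp only [List.map_cons, List.sum_cons, List.length_cons]
    have : (a + 1) / 2 = k + 1 := by omega
    rw [this]
    omega

def sortDesc (M : Multiset ℕ) : List ℕ := (M.sort (· ≤ ·)).reverse

lemma sortDesc_sorted (M : Multiset ℕ) : (sortDesc M).Pairwise (· ≥ ·) := by
  unfold sortDesc
  rw [List.pairwise_reverse]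
  exact Multiset.pairwise_sort M (· ≤ ·)

lemma coe_sortDesc (M : Multiset ℕ) : (sortDesc M : Multiset ℕ) = M := by
  unfold sortDesc
  rw [Multiset.coe_reverse, Multiset.sort_eq]

instance : IsAntisymm ℕ (· ≥ ·) := ⟨fun _ _ h1 h2 => le_antisymm h2 h1⟩

lemma sortDesc_coe (L : List ℕ) (hL : L.Pairwise (· ≥ ·)) : sortDesc (↑L) = L := by
  apply List.Perm.eq_of_pairwise' (sortDesc_sorted _) hL
  rw [← Multiset.coe_eq_coe, coe_sortDesc]

lemma sorted_map_of_sorted {l : List ℕ} (h : l.Pairwise (· ≥ ·)) (f : ℕ → ℕ)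
    (hf : ∀ a b : ℕ, b ≤ a → f b ≤ f a) : (l.map f).Pairwise (· ≥ ·) :=
  List.Pairwise.map f (fun a b hab => hf a b hab) h

lemma ODS_ext {n : ℕ} {σ τ : OddDurfeeSymbol n} (hD : σ.D = τ.D)
    (ht : σ.top = τ.top) (hb : σ.bot = τ.bot) : σ = τ := by
  cases σ; cases τ
  simp only at hD ht hb
  subst hD; subst ht; subst hb
  rfl
/-! ### The bijection, at the level of sorted lists -/

def symD (L : List ℕ) : ℕ := durfee L 0
def symT (L : List ℕ) : ℕ := L.length - symD L
def symS (m : ℤ) (L : List ℕ) : ℕ := (m + symT L).toNat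
def symGamma (L : List ℕ) : List ℕ := (L.take (symD L)).map (fun x => x - (symD L + 1))
def symTop (m : ℤ) (L : List ℕ) : List ℕ :=
  (conjBox (symGamma L) (symS m L)).map (fun c => 2 * c + 1)
def symBot (L : List ℕ) : List ℕ := (L.drop (symD L)).map (fun d => 2 * d - 1)
def toListD (D : ℕ) (top bot : List ℕ) : List ℕ :=
  (conjBox (top.map (fun a => (a - 1) / 2)) D).map (fun x => x + (D + 1))
    ++ bot.map (fun b => (b + 1) / 2)

lemma take_ge {L : List ℕ} (hL : L.Pairwise (· ≥ ·)) :
    ∀ x ∈ L.take (symD L), symD L + 1 ≤ x := by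
  intro x hx
  obtain ⟨i, hi, rfl⟩ := List.getElem_of_mem hx
  rw [List.getElem_take]
  have hiD : i < symD L := by
    have := hi; rw [List.length_take] at this; omega
  have hDlen : symD L ≤ L.length := durfee_le_length L 0
  have hilen : i < L.length := by omega
  have hd1 : symD L - 1 < L.length := by omega
  have h1 : 0 + (symD L - 1) + 2 ≤ L[symD L - 1] := durfee_get L 0 _ (by show symD L - 1 < symD L; omega) hd1
  rcases Nat.lt_or_ge i (symD L - 1) with h | h
  · have := (List.pairwise_iff_getElem.mp hL) i (symD L - 1) hilen hd1 h
    omega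
  · have hieq : i = symD L - 1 := by omega
    subst hieq; omega

lemma drop_le {L : List ℕ} (hL : L.Pairwise (· ≥ ·)) :
    ∀ x ∈ L.drop (symD L), x ≤ symD L + 1 := by
  intro x hx
  obtain ⟨j, hj, rfl⟩ := List.getElem_of_mem hx
  rw [List.getElem_drop]
  have hjlen : symD L + j < L.length := by
    rw [List.length_drop] at hj; omega
  have hDlen : symD L < L.length := by omega
  have h1 : L[symD L] < 0 + symD L + 2 := durfee_lt L 0 hDlen
  rcases Nat.eq_zero_or_pos j with h | h
  · subst h
    simp only [Nat.add_zero]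
    omega
  · have := (List.pairwise_iff_getElem.mp hL) (symD L) (symD L + j) hDlen hjlen (by omega)
    omega

section Hyps

variable {m : ℤ} {N : ℕ} {L : List ℕ}

lemma t_nonneg (hL : L.Pairwise (· ≥ ·)) (hpos : ∀ x ∈ L, 0 < x) (hsum : L.sum = N)
    (hNle : (N : ℤ) ≤ m + 2) (hm : -1 ≤ m) (hm1 : m = -1 → 1 ≤ N) :
    0 ≤ m + (symT L : ℤ) := by
  rcases (by omega : m = -1 ∨ 0 ≤ m) with hm' | hm'
  · have hN1 : 1 ≤ N := hm1 hm'
    by_contra hcon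
    have hDlen : symD L ≤ L.length := durfee_le_length L 0
    have ht0 : L.length = symD L := by
      unfold symT at hcon; omega
    have htake : L.take (symD L) = L := by
      rw [← ht0]; exact List.take_length
    have hge : ∀ x ∈ L, symD L + 1 ≤ x := by
      intro x hx; exact take_ge hL x (by rwa [htake])
    have hsum2 : L.length * (symD L + 1) ≤ L.sum := length_mul_le_sum _ _ hge
    have hNle' : N ≤ 1 := by omega
    rw [hsum, ht0] at hsum2
    have hD0 : symD L = 0 := by nlinarith
    rw [hD0] at ht0
    have hnil : L = [] := List.length_eq_zero_iff.mp ht0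
    rw [hnil] at hsum
    simp at hsum
    omega
  · have : (0:ℤ) ≤ (symT L : ℤ) := Int.natCast_nonneg _
    omega

lemma take_mem_bound (hL : L.Pairwise (· ≥ ·)) (hpos : ∀ x ∈ L, 0 < x) (hsum : L.sum = N)
    (hNle : (N : ℤ) ≤ m + 2) :
    ∀ y ∈ L.take (symD L), (y : ℤ) ≤ m + (symT L : ℤ) + symD L + 1 := by
  intro y hy
  have hDlen : symD L ≤ L.length := durfee_le_length L 0
  have hlenT : (L.take (symD L)).length = symD L := by
    rw [List.length_take]; omega
  have hD1 : 1 ≤ symD L := by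
    by_contra h
    have hz : symD L = 0 := by omega
    rw [hz] at hy; simp at hy
  have h1 : y + ((L.take (symD L)).length - 1) * (symD L + 1) ≤ (L.take (symD L)).sum :=
    mem_le_sum_sub _ _ _ hy (take_ge hL)
  have h2 : (L.take (symD L)).sum + (L.drop (symD L)).sum = N := by
    rw [List.sum_take_add_sum_drop, hsum]
  have h3 : (L.drop (symD L)).length ≤ (L.drop (symD L)).sum := by
    have := length_mul_le_sum (L.drop (symD L)) 1
      (fun x hx => hpos x (List.mem_of_mem_drop hx))
    simpa using this
  rw [hlenT] at h1
  have hlenD : (L.drop (symD L)).length = symT L := List.length_drop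
  rw [hlenD] at h3
  have hc1 : ((symD L - 1) * (symD L + 1) : ℕ) = ((symD L : ℤ) - 1) * ((symD L : ℤ) + 1) := by
    push_cast [hD1]
    ring
  have h1' : (y : ℤ) + ((symD L : ℤ) - 1) * ((symD L : ℤ) + 1) ≤ ((L.take (symD L)).sum : ℤ) := by
    rw [← hc1]
    exact_mod_cast h1
  have h2' : ((L.take (symD L)).sum : ℤ) + ((L.drop (symD L)).sum : ℤ) = (N : ℤ) := by
    exact_mod_cast h2
  have h3' : (symT L : ℤ) ≤ ((L.drop (symD L)).sum : ℤ) := by exact_mod_cast h3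
  have hD1' : (1 : ℤ) ≤ (symD L : ℤ) := by exact_mod_cast hD1
  nlinarith [sq_nonneg ((symD L : ℤ) - 1)]

lemma symS_cast (hL : L.Pairwise (· ≥ ·)) (hpos : ∀ x ∈ L, 0 < x) (hsum : L.sum = N)
    (hNle : (N : ℤ) ≤ m + 2) (hm : -1 ≤ m) (hm1 : m = -1 → 1 ≤ N) :
    (symS m L : ℤ) = m + (symT L : ℤ) := by
  unfold symS
  rw [Int.toNat_of_nonneg (t_nonneg hL hpos hsum hNle hm hm1)]

lemma symGamma_length (L : List ℕ) : (symGamma L).length = symD L := by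
  unfold symGamma
  rw [List.length_map, List.length_take]
  have := durfee_le_length L 0
  unfold symD
  omega

lemma symGamma_sorted (hL : L.Pairwise (· ≥ ·)) : (symGamma L).Pairwise (· ≥ ·) := by
  unfold symGamma
  apply sorted_map_of_sorted _ _ (fun a b hab => Nat.sub_le_sub_right hab _)
  exact List.Pairwise.sublist (List.take_sublist _ _) hL

lemma symGamma_le (hL : L.Pairwise (· ≥ ·)) (hpos : ∀ x ∈ L, 0 < x) (hsum : L.sum = N)
    (hNle : (N : ℤ) ≤ m + 2) (hm : -1 ≤ m) (hm1 : m = -1 → 1 ≤ N) :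
    ∀ x ∈ symGamma L, x ≤ symS m L := by
  intro x hx
  unfold symGamma at hx
  obtain ⟨y, hy, rfl⟩ := List.mem_map.mp hx
  have h1 := take_mem_bound hL hpos hsum hNle y hy
  have h2 := symS_cast (m := m) hL hpos hsum hNle hm hm1
  have : (y : ℤ) ≤ (symS m L : ℤ) + symD L + 1 := by omega
  have hy' : y ≤ symS m L + symD L + 1 := by exact_mod_cast this
  omega

end Hyps

section Fields

variable {m : ℤ} {N n : ℕ} {L : List ℕ}

lemma symTop_sorted : (symTop m L).Pairwise (· ≥ ·) :=
  sorted_map_of_sorted (conjBox_sorted _ _) _ (fun _ _ h => by omega)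

lemma symTop_odd : ∀ x ∈ symTop m L, Odd x := by
  intro x hx
  obtain ⟨c, _, rfl⟩ := List.mem_map.mp hx
  exact ⟨c, by ring⟩

lemma symTop_le : ∀ x ∈ symTop m L, x ≤ 2 * symD L + 1 := by
  intro x hx
  obtain ⟨c, hc, rfl⟩ := List.mem_map.mp hx
  have := mem_conjBox_le _ _ _ hc
  rw [symGamma_length] at this
  omega

lemma symBot_sorted (hL : L.Pairwise (· ≥ ·)) : (symBot L).Pairwise (· ≥ ·) :=
  sorted_map_of_sorted (List.Pairwise.sublist (List.drop_sublist _ _) hL) _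
    (fun _ _ h => by omega)

lemma symBot_odd (hpos : ∀ x ∈ L, 0 < x) : ∀ x ∈ symBot L, Odd x := by
  intro x hx
  obtain ⟨d, hd, rfl⟩ := List.mem_map.mp hx
  have := hpos d (List.mem_of_mem_drop hd)
  exact ⟨d - 1, by omega⟩

lemma symBot_le (hL : L.Pairwise (· ≥ ·)) : ∀ x ∈ symBot L, x ≤ 2 * symD L + 1 := by
  intro x hx
  obtain ⟨d, hd, rfl⟩ := List.mem_map.mp hx
  have := drop_le hL d hd
  omega

lemma symTop_length : (symTop m L).length = symS m L := by
  simp [symTop]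

lemma symBot_length : (symBot L).length = symT L := by
  simp [symBot, symT]

lemma sym_rank (hL : L.Pairwise (· ≥ ·)) (hpos : ∀ x ∈ L, 0 < x) (hsum : L.sum = N)
    (hNle : (N : ℤ) ≤ m + 2) (hm : -1 ≤ m) (hm1 : m = -1 → 1 ≤ N) :
    ((symTop m L).length : ℤ) - ((symBot L).length : ℤ) = m := by
  rw [symTop_length, symBot_length, symS_cast hL hpos hsum hNle hm hm1]
  ring

lemma sym_sum (hL : L.Pairwise (· ≥ ·)) (hpos : ∀ x ∈ L, 0 < x) (hsum : L.sum = N)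
    (hNle : (N : ℤ) ≤ m + 2) (hm : -1 ≤ m) (hm1 : m = -1 → 1 ≤ N)
    (h2N : (n : ℤ) = 2 * N + m + 1) :
    (symTop m L).sum + (symBot L).sum + 2 * symD L ^ 2 + 2 * symD L + 1 = n := by
  have hDlen : symD L ≤ L.length := durfee_le_length L 0
  have h1 : (symTop m L).sum = 2 * (conjBox (symGamma L) (symS m L)).sum + symS m L := by
    unfold symTop
    rw [sum_two_mul_add_one, length_conjBox]
  have h2 : (conjBox (symGamma L) (symS m L)).sum = (symGamma L).sum :=
    sum_conjBox _ _ (symGamma_le hL hpos hsum hNle hm hm1)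
  have h3 : (symGamma L).sum + (L.take (symD L)).length * (symD L + 1) = (L.take (symD L)).sum :=
    sum_map_sub _ _ (take_ge hL)
  have h3' : (L.take (symD L)).length = symD L := by
    rw [List.length_take]; omega
  rw [h3'] at h3
  have h4 : (symBot L).sum + (L.drop (symD L)).length = 2 * (L.drop (symD L)).sum :=
    sum_two_mul_sub_one _ (fun x hx => hpos x (List.mem_of_mem_drop hx))
  have h5 : (L.take (symD L)).sum + (L.drop (symD L)).sum = N := by
    rw [List.sum_take_add_sum_drop, hsum]
  have h6 : (symS m L : ℤ) = m + symT L := symS_cast hL hpos hsum hNle hm hm1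
  have h7 : (L.drop (symD L)).length = symT L := List.length_drop
  rw [h7] at h4
  have e : ((symD L : ℤ)) * ((symD L : ℤ) + 1) = (symD L : ℤ) ^ 2 + (symD L : ℤ) := by ring
  have goal' : ((symTop m L).sum : ℤ) + ((symBot L).sum : ℤ)
      + 2 * (symD L : ℤ) ^ 2 + 2 * (symD L : ℤ) + 1 = (n : ℤ) := by
    have h1' : ((symTop m L).sum : ℤ)
        = 2 * ((conjBox (symGamma L) (symS m L)).sum : ℤ) + (symS m L : ℤ) := by
      exact_mod_cast h1
    have h2' : ((conjBox (symGamma L) (symS m L)).sum : ℤ) = ((symGamma L).sum : ℤ) := by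
      exact_mod_cast h2
    have h3c : ((symGamma L).sum : ℤ) + (symD L : ℤ) * ((symD L : ℤ) + 1)
        = ((L.take (symD L)).sum : ℤ) := by exact_mod_cast h3
    have h4' : ((symBot L).sum : ℤ) + (symT L : ℤ) = 2 * ((L.drop (symD L)).sum : ℤ) := by
      exact_mod_cast h4
    have h5' : ((L.take (symD L)).sum : ℤ) + ((L.drop (symD L)).sum : ℤ) = (N : ℤ) := by
      exact_mod_cast h5
    rw [h1', h2', h6]
    linarith
  exact_mod_cast goal'

lemma toListD_sym (hL : L.Pairwise (· ≥ ·)) (hpos : ∀ x ∈ L, 0 < x) (hsum : L.sum = N)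
    (hNle : (N : ℤ) ≤ m + 2) (hm : -1 ≤ m) (hm1 : m = -1 → 1 ≤ N) :
    toListD (symD L) (symTop m L) (symBot L) = L := by
  have s1 : (symTop m L).map (fun a => (a - 1) / 2) = conjBox (symGamma L) (symS m L) := by
    unfold symTop
    apply map_map_self
    intro c _
    omega
  have s2 : conjBox (conjBox (symGamma L) (symS m L)) (symD L) = symGamma L := by
    have := conjBox_conjBox (symGamma L) (symS m L) (symGamma_sorted hL)
      (symGamma_le hL hpos hsum hNle hm hm1)
    rwa [symGamma_length] at this
  have s3 : (symGamma L).map (fun x => x + (symD L + 1)) = L.take (symD L) := by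
    unfold symGamma
    apply map_map_self
    intro y hy
    have := take_ge hL y hy
    omega
  have s4 : (symBot L).map (fun b => (b + 1) / 2) = L.drop (symD L) := by
    unfold symBot
    apply map_map_self
    intro d hd
    have := hpos d (List.mem_of_mem_drop hd)
    omega
  unfold toListD
  rw [s1, s2, s3, s4, List.take_append_drop]

end Fields

section SymbolSide

variable {n : ℕ}

def alphaOf (σ : OddDurfeeSymbol n) : List ℕ := σ.top.map (fun a => (a - 1) / 2)
def ROf (σ : OddDurfeeSymbol n) : List ℕ :=
  (conjBox (alphaOf σ) σ.D).map (fun x => x + (σ.D + 1))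
def dOf (σ : OddDurfeeSymbol n) : List ℕ := σ.bot.map (fun b => (b + 1) / 2)

lemma toListD_eq (σ : OddDurfeeSymbol n) :
    toListD σ.D σ.top σ.bot = ROf σ ++ dOf σ := rfl

variable (σ : OddDurfeeSymbol n)

lemma alpha_sorted : (alphaOf σ).Pairwise (· ≥ ·) :=
  sorted_map_of_sorted σ.top_sorted _ (fun a b h => by omega)

lemma alpha_le : ∀ c ∈ alphaOf σ, c ≤ σ.D := by
  intro c hc
  obtain ⟨a, ha, rfl⟩ := List.mem_map.mp hc
  have := σ.top_le a ha
  omega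

lemma alpha_length : (alphaOf σ).length = σ.top.length := List.length_map _

lemma R_length : (ROf σ).length = σ.D := by
  unfold ROf; rw [List.length_map, length_conjBox]

lemma R_ge : ∀ x ∈ ROf σ, σ.D + 1 ≤ x := by
  intro x hx
  obtain ⟨c, _, rfl⟩ := List.mem_map.mp hx
  omega

lemma d_le : ∀ x ∈ dOf σ, x ≤ σ.D + 1 := by
  intro x hx
  obtain ⟨b, hb, rfl⟩ := List.mem_map.mp hx
  have := σ.bot_le b hb
  omega

lemma d_pos : ∀ x ∈ dOf σ, 1 ≤ x := by
  intro x hx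
  obtain ⟨b, hb, rfl⟩ := List.mem_map.mp hx
  obtain ⟨k, rfl⟩ := σ.bot_odd b hb
  omega

lemma listB_sorted : (toListD σ.D σ.top σ.bot).Pairwise (· ≥ ·) := by
  rw [toListD_eq]
  rw [List.pairwise_append]
  refine ⟨?_, ?_, ?_⟩
  · exact sorted_map_of_sorted (conjBox_sorted _ _) _ (fun a b h => by omega)
  · exact sorted_map_of_sorted σ.bot_sorted _ (fun a b h => by omega)
  · intro a ha b hb
    have h1 := R_ge σ a ha
    have h2 := d_le σ b hb
    omega

lemma listB_pos : ∀ x ∈ toListD σ.D σ.top σ.bot, 0 < x := by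
  rw [toListD_eq]
  intro x hx
  rcases List.mem_append.mp hx with h | h
  · have := R_ge σ x h; omega
  · have := d_pos σ x h; omega

lemma B4 : symD (toListD σ.D σ.top σ.bot) = σ.D := by
  unfold symD
  rw [toListD_eq]
  have := durfee_append (ROf σ) (dOf σ) 0 ?_ ?_
  · rw [this, R_length]
  · intro i h
    have hlen : i < σ.D := by rw [R_length] at h; exact h
    have hge : σ.D + 1 ≤ (ROf σ)[i] := R_ge σ _ (List.getElem_mem h)
    omega
  · intro x hx
    have hmem : x ∈ dOf σ := List.mem_of_mem_head? (Option.mem_def.mpr hx)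
    have := d_le σ x hmem
    rw [R_length]
    omega

lemma Btake : (toListD σ.D σ.top σ.bot).take σ.D = ROf σ := by
  rw [toListD_eq, ← R_length σ, List.take_left]

lemma Bdrop : (toListD σ.D σ.top σ.bot).drop σ.D = dOf σ := by
  rw [toListD_eq, ← R_length σ, List.drop_left]

lemma B6 : symBot (toListD σ.D σ.top σ.bot) = σ.bot := by
  unfold symBot
  rw [B4, Bdrop]
  unfold dOf
  apply map_map_self
  intro b hb
  obtain ⟨k, rfl⟩ := σ.bot_odd b hb
  omega

lemma Blength : (toListD σ.D σ.top σ.bot).length = σ.D + σ.bot.length := by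
  rw [toListD_eq, List.length_append, R_length]
  unfold dOf
  rw [List.length_map]

lemma BsymT : symT (toListD σ.D σ.top σ.bot) = σ.bot.length := by
  unfold symT
  rw [Blength, B4]
  omega

lemma BsymS {m : ℤ} (hrank : oddRank σ = m) :
    symS m (toListD σ.D σ.top σ.bot) = σ.top.length := by
  unfold symS
  rw [BsymT]
  unfold oddRank at hrank
  have : m + (σ.bot.length : ℤ) = (σ.top.length : ℤ) := by omega
  rw [this, Int.toNat_natCast]

lemma BsymGamma : symGamma (toListD σ.D σ.top σ.bot) = conjBox (alphaOf σ) σ.D := by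
  unfold symGamma
  rw [B4, Btake]
  unfold ROf
  apply map_map_self
  intro c _
  omega

lemma B5 {m : ℤ} (hrank : oddRank σ = m) :
    symTop m (toListD σ.D σ.top σ.bot) = σ.top := by
  unfold symTop
  rw [BsymS σ hrank, BsymGamma]
  have h1 : conjBox (conjBox (alphaOf σ) σ.D) σ.top.length = alphaOf σ := by
    have := conjBox_conjBox (alphaOf σ) σ.D (alpha_sorted σ) (alpha_le σ)
    rwa [alpha_length] at this
  rw [h1]
  unfold alphaOf
  apply map_map_self
  intro a ha
  obtain ⟨k, rfl⟩ := σ.top_odd a ha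
  omega

lemma B3 {m : ℤ} {N : ℕ} (hrank : oddRank σ = m) (h2N : (n : ℤ) = 2 * N + m + 1) :
    (toListD σ.D σ.top σ.bot).sum = N := by
  have hs5 : (toListD σ.D σ.top σ.bot).sum = (ROf σ).sum + (dOf σ).sum := by
    rw [toListD_eq, List.sum_append]
  have hs1 : (ROf σ).sum = (conjBox (alphaOf σ) σ.D).sum + σ.D * (σ.D + 1) := by
    unfold ROf
    rw [sum_map_addc, length_conjBox]
  have hs2 : (conjBox (alphaOf σ) σ.D).sum = (alphaOf σ).sum :=
    sum_conjBox _ _ (alpha_le σ)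
  have hs3 : σ.top.sum = 2 * (alphaOf σ).sum + σ.top.length :=
    sum_map_half_pred _ σ.top_odd
  have hs4 : 2 * (dOf σ).sum = σ.bot.sum + σ.bot.length :=
    sum_map_half_succ _ σ.bot_odd
  have hsE := σ.sum_eq
  unfold oddRank at hrank
  have goal' : ((toListD σ.D σ.top σ.bot).sum : ℤ) = (N : ℤ) := by
    have e : ((σ.D : ℤ)) * ((σ.D : ℤ) + 1) = (σ.D : ℤ) ^ 2 + (σ.D : ℤ) := by ring
    have c5 : ((toListD σ.D σ.top σ.bot).sum : ℤ) = ((ROf σ).sum : ℤ) + ((dOf σ).sum : ℤ) := by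
      exact_mod_cast hs5
    have c1 : ((ROf σ).sum : ℤ)
        = ((conjBox (alphaOf σ) σ.D).sum : ℤ) + (σ.D : ℤ) * ((σ.D : ℤ) + 1) := by
      exact_mod_cast hs1
    have c2 : ((conjBox (alphaOf σ) σ.D).sum : ℤ) = ((alphaOf σ).sum : ℤ) := by
      exact_mod_cast hs2
    have c3 : (σ.top.sum : ℤ) = 2 * ((alphaOf σ).sum : ℤ) + (σ.top.length : ℤ) := by
      exact_mod_cast hs3
    have c4 : 2 * ((dOf σ).sum : ℤ) = (σ.bot.sum : ℤ) + (σ.bot.length : ℤ) := by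
      exact_mod_cast hs4
    have cE : (σ.top.sum : ℤ) + (σ.bot.sum : ℤ) + 2 * (σ.D : ℤ) ^ 2 + 2 * (σ.D : ℤ) + 1
        = (n : ℤ) := by exact_mod_cast hsE
    linarith
  exact_mod_cast goal'

end SymbolSide

lemma card_eq {m : ℤ} {N n : ℕ} (hNle : (N : ℤ) ≤ m + 2) (hm : -1 ≤ m)
    (hm1 : m = -1 → 1 ≤ N) (h2N : (n : ℤ) = 2 * N + m + 1) :
    Nat.card {σ : OddDurfeeSymbol n // oddRank σ = m} = Nat.card (Nat.Partition N) := by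
  have hLs : ∀ P : Nat.Partition N, (sortDesc P.parts).Pairwise (· ≥ ·) :=
    fun P => sortDesc_sorted _
  have hLp : ∀ P : Nat.Partition N, ∀ x ∈ sortDesc P.parts, 0 < x := by
    intro P x hx
    exact P.parts_pos (by rw [← coe_sortDesc P.parts]; exact Multiset.mem_coe.mpr hx)
  have hLsum : ∀ P : Nat.Partition N, (sortDesc P.parts).sum = N := by
    intro P
    have : ((sortDesc P.parts : Multiset ℕ)).sum = N := by
      rw [coe_sortDesc]; exact P.parts_sum
    rwa [Multiset.sum_coe] at this
  apply Nat.card_congr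
  refine
    { toFun := fun σp =>
        { parts := (toListD σp.1.D σp.1.top σp.1.bot : Multiset ℕ)
          parts_pos := fun hi => listB_pos σp.1 _ (Multiset.mem_coe.mp hi)
          parts_sum := by
            rw [Multiset.sum_coe]
            exact B3 σp.1 σp.2 h2N }
      invFun := fun P =>
        ⟨{ D := symD (sortDesc P.parts)
           top := symTop m (sortDesc P.parts)
           bot := symBot (sortDesc P.parts)
           top_sorted := symTop_sorted
           bot_sorted := symBot_sorted (hLs P)
           top_odd := symTop_odd
           bot_odd := symBot_odd (hLp P)
           top_le := symTop_le
           bot_le := symBot_le (hLs P)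
           sum_eq := sym_sum (hLs P) (hLp P) (hLsum P) hNle hm hm1 h2N },
         by
           show ((symTop m _).length : ℤ) - ((symBot _).length : ℤ) = m
           exact sym_rank (hLs P) (hLp P) (hLsum P) hNle hm hm1⟩
      left_inv := by
        intro σp
        apply Subtype.ext
        apply ODS_ext
        · show symD (sortDesc ↑(toListD σp.1.D σp.1.top σp.1.bot)) = σp.1.D
          rw [sortDesc_coe _ (listB_sorted σp.1)]
          exact B4 σp.1
        · show symTop m (sortDesc ↑(toListD σp.1.D σp.1.top σp.1.bot)) = σp.1.top
          rw [sortDesc_coe _ (listB_sorted σp.1)]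
          exact B5 σp.1 σp.2
        · show symBot (sortDesc ↑(toListD σp.1.D σp.1.top σp.1.bot)) = σp.1.bot
          rw [sortDesc_coe _ (listB_sorted σp.1)]
          exact B6 σp.1
      right_inv := by
        intro P
        apply Nat.Partition.ext
        show (↑(toListD (symD (sortDesc P.parts)) (symTop m (sortDesc P.parts))
            (symBot (sortDesc P.parts))) : Multiset ℕ) = P.parts
        rw [toListD_sym (hLs P) (hLp P) (hLsum P) hNle hm hm1, coe_sortDesc] }

lemma length_le_sum_of_pos (l : List ℕ) (h : ∀ x ∈ l, 0 < x) : l.length ≤ l.sum := by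
  have := length_mul_le_sum l 1 h
  simpa using this

end ODAux

/-- For integers `n ≥ 1` and `m` with `n ≤ 3m+5` and `n ≡ m+1 (mod 2)`,
`N⁰(m,n) = p((n−m−1)/2)`. -/
theorem N0_eq_partitionCount (n : ℕ) (hn : 1 ≤ n) (m : ℤ)
    (hle : (n : ℤ) ≤ 3 * m + 5) (hpar : (n : ℤ) ≡ m + 1 [ZMOD 2]) :
    N0 m n = partitionCountZ (((n : ℤ) - m - 1) / 2) := by
  have hm : -1 ≤ m := by omega
  have hdvd : (2 : ℤ) ∣ (m + 1) - (n : ℤ) := hpar.dvd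
  by_cases hcase : (n : ℤ) ≤ m
  · -- no odd Durfee symbols of rank `m` exist
    have hempty : IsEmpty {σ : OddDurfeeSymbol n // oddRank σ = m} := by
      constructor
      rintro ⟨σ, hr⟩
      have h1 : σ.top.length ≤ σ.top.sum :=
        ODAux.length_le_sum_of_pos _ (fun x hx => (σ.top_odd x hx).pos)
      have h2 : σ.top.sum + 1 ≤ n := by
        have := σ.sum_eq
        omega
      unfold oddRank at hr
      have h3 : (0 : ℤ) ≤ σ.bot.length := Int.natCast_nonneg _
      have h4 : (σ.top.length : ℤ) ≤ (σ.top.sum : ℤ) := by exact_mod_cast h1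
      have h5 : (σ.top.sum : ℤ) + 1 ≤ (n : ℤ) := by exact_mod_cast h2
      omega
    rw [N0, Nat.card_of_isEmpty, partitionCountZ, if_neg (by omega)]
  · obtain ⟨c, hc⟩ := hdvd
    have hc0 : 0 ≤ -c := by omega
    set N : ℕ := (-c).toNat with hN
    have hcN : ((N : ℤ)) = -c := Int.toNat_of_nonneg hc0
    have h2N : (n : ℤ) = 2 * N + m + 1 := by omega
    have hNle : (N : ℤ) ≤ m + 2 := by omega
    have hm1 : m = -1 → 1 ≤ N := by
      intro hmm
      have : (1 : ℤ) ≤ N := by omega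
      exact_mod_cast this
    have hdiv : ((n : ℤ) - m - 1) / 2 = (N : ℤ) := by
      have : (n : ℤ) - m - 1 = 2 * (N : ℤ) := by omega
      rw [this, Int.mul_ediv_cancel_left _ (by norm_num)]
    rw [N0, partitionCountZ, hdiv, if_pos (Int.natCast_nonneg _), Int.toNat_natCast]
    exact ODAux.card_eq hNle hm hm1 h2N
end
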